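/- arXiv:2605.16196 — 2 statements merged into one kernel-verified Lean document; each statement's English description precedes it below -/
import Mathlib

section
/- Under the above hypotheses (A, C, P > 0, B real, CA + BP > 0), the function f(x) = (Px − Cx²)/(A + Bx) attains its unique maximum on {x ≥ 0 : A + Bx > 0} at x* = (−A + √(A(A + BP/C)))/B when B ≠ 0 (interpreting the limit B → 0 as x* = P/(2C)). -/
theorem stmt_6 (P A C B : ℝ) (hP : 0 < P) (hA : 0 < A) (hC : 0 < C)
    (hB : B ≠ 0) (hCB : 0 < C * A + B * P) :
    let f : ℝ → ℝ := fun x => (P * x - C * x ^ 2) / (A + B * x)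
    let xstar := (-A + Real.sqrt (A * (A + B * P / C))) / B
    (0 ≤ xstar ∧ 0 < A + B * xstar) ∧
      ∀ x : ℝ, 0 ≤ x → 0 < A + B * x → x ≠ xstar → f x < f xstar := by
  intro f xstar
  have ht : 0 < A * (A + B * P / C) := by
    have h : A + B * P / C = (C * A + B * P) / C := by field_simp
    rw [h]; positivity
  set s := Real.sqrt (A * (A + B * P / C)) with hs_def
  have hs2 : s ^ 2 = A * (A + B * P / C) := Real.sq_sqrt ht.le
  have hs : 0 < s := Real.sqrt_pos.mpr ht
  have hBx : B * xstar = -A + s := by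
    show B * ((-A + s) / B) = -A + s
    field_simp
  have hAs : A + B * xstar = s := by rw [hBx]; ring
  have hCs : C * s ^ 2 = C * A ^ 2 + A * B * P := by
    rw [hs2]; field_simp
  have hq : C * B * xstar ^ 2 + 2 * C * A * xstar - P * A = 0 := by
    have h2 : C * (B * xstar) ^ 2 + 2 * C * A * (B * xstar) - P * A * B = 0 := by
      rw [hBx]; nlinarith [hCs]
    have h3 : B * (C * B * xstar ^ 2 + 2 * C * A * xstar - P * A) = 0 := by
      linear_combination h2
    rcases mul_eq_zero.mp h3 with h | h
    · exact absurd h hB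
    · exact h
  have hpos : 0 < C * B * xstar + 2 * C * A := by nlinarith [hBx, hs]
  have hx0 : 0 ≤ xstar := by
    by_contra hcon
    push_neg at hcon
    nlinarith [mul_pos hP hA, mul_pos hpos (neg_pos.mpr hcon)]
  have hApos : 0 < A + B * xstar := by rw [hAs]; exact hs
  have hfx : f xstar = C * xstar ^ 2 / A := by
    show (P * xstar - C * xstar ^ 2) / (A + B * xstar) = C * xstar ^ 2 / A
    rw [div_eq_div_iff hApos.ne' hA.ne']
    linear_combination (-xstar) * hq
  refine ⟨⟨hx0, hApos⟩, ?_⟩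
  intro x hx hD hne
  have hsub : x - xstar ≠ 0 := sub_ne_zero.mpr hne
  have hsq : 0 < (x - xstar) ^ 2 := by positivity
  have hxq : x * (C * B * xstar ^ 2 + 2 * C * A * xstar - P * A) = 0 := by
    rw [hq]; ring
  calc f x < C * xstar ^ 2 / A := by
        show (P * x - C * x ^ 2) / (A + B * x) < C * xstar ^ 2 / A
        rw [div_lt_div_iff₀ hD hA]
        nlinarith [mul_pos (mul_pos hC hA) hsq, hxq]
    _ = f xstar := hfx.symm
end

section
/- For ρ_τ, ρ_d > 0 subject to ρ_τ + Kρ_d = (1+K)ρ with K > 1 and ρ > 0, the maximum of ρ_τρ_d/(ρ_τ + ρ_d) over the feasible set equals (1+K)ρ/(1+√K)². -/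
theorem stmt_11 (K ρ : ℝ) (hK : 1 < K) (hρ : 0 < ρ) :
    IsGreatest
      {y : ℝ | ∃ ρτ ρd : ℝ, 0 ≤ ρτ ∧ 0 ≤ ρd ∧ ρτ + K * ρd = (1 + K) * ρ ∧
        y = ρτ * ρd / (ρτ + ρd)}
      ((1 + K) * ρ / (1 + Real.sqrt K) ^ 2) := by
  have hK0 : (0:ℝ) < K := lt_trans one_pos hK
  set s := Real.sqrt K with hs
  have hsK : s ^ 2 = K := Real.sq_sqrt hK0.le
  have hs0 : 0 < s := Real.sqrt_pos.mpr hK0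
  have hs1 : 1 < s := by nlinarith
  have hS : (0:ℝ) < (1 + K) * ρ := by nlinarith
  constructor
  · refine ⟨(1 + K) * ρ / (1 + s), (1 + K) * ρ / (s * (1 + s)), ?_, ?_, ?_, ?_⟩
    · positivity
    · positivity
    · rw [← hsK]; field_simp
    · rw [← hsK]; field_simp; ring
  · rintro y ⟨a, b, ha, hb, hcon, rfl⟩
    have hab : 0 < a + b := by
      rcases lt_or_eq_of_le (add_nonneg ha hb) with h | h
      · exact h
      · exfalso
        have ha0 : a = 0 := by linarith
        have hb0 : b = 0 := by linarith
        rw [ha0, hb0] at hcon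
        nlinarith
    rw [div_le_div_iff₀ hab (by positivity)]
    have hconS : a + s ^ 2 * b = (1 + K) * ρ := by rw [hsK]; exact hcon
    nlinarith [sq_nonneg (a - s * b), mul_nonneg ha hb]
end
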